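/- arXiv:2602.20465 — 5 statements merged into one kernel-verified Lean document; each statement's English description precedes it below -/
import Mathlib

section
/- In the stochastic setup with a fixed reward-mean sequence μ, for every δ ∈ (0,1), with probability at least 1 − δ the D-weighted pseudo-regret of the realized recommendation sequence is bounded by the D-weighted external regret plus a concentration term: PReg_D(μ) ≤ Reg_D + 2√(2·W₂(D)·ln(2K/δ)). -/
open Finset MeasureTheory ProbabilityTheory

noncomputable section

/-- A reward-mean sequence `μ` (with `μ t a` the mean reward of action `a` at time `t`)
is `ρ`-slowly-moving if consecutive mean vectors differ by at most `ρ` in sup-norm. -/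
def SlowlyMoving {T K : ℕ} (μ : Fin T → Fin K → ℝ) (ρ : ℝ) : Prop :=
  ∀ (t : Fin T) (ht : t.1 + 1 < T) (a : Fin K), |μ ⟨t.1 + 1, ht⟩ a - μ t a| ≤ ρ

/-- One-sided dispersion `Ψ_D(t) = E_{s∼D}|t-s|` of a temporal belief `D`. -/
def Psi {T : ℕ} (D : Fin T → ℝ) (t : Fin T) : ℝ :=
  ∑ s : Fin T, D s * |(t.1 : ℝ) - (s.1 : ℝ)|

/-- Max dispersion `Ψ_max(D)`: the supremum of `Ψ_D` over the smallest interval of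
time steps containing the support of `D`. -/
def PsiMax {T : ℕ} (D : Fin T → ℝ) : ℝ :=
  sSup (Psi D '' {t | ∃ t₁ t₂ : Fin T, D t₁ ≠ 0 ∧ D t₂ ≠ 0 ∧ t₁ ≤ t ∧ t ≤ t₂})

/-- Mean dispersion `Φ(D) = E_{s,t∼D}|s-t|`. -/
def PhiD {T : ℕ} (D : Fin T → ℝ) : ℝ :=
  ∑ s : Fin T, ∑ t : Fin T, D s * D t * |(s.1 : ℝ) - (t.1 : ℝ)|

/-- `W₂(D) = Σ_t D(t)²`. -/
def W2 {T : ℕ} (D : Fin T → ℝ) : ℝ := ∑ t : Fin T, (D t) ^ 2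

lemma univ_ne {K : ℕ} (hK : 2 ≤ K) : (univ : Finset (Fin K)).Nonempty :=
  ⟨⟨0, by omega⟩, mem_univ _⟩

lemma erase_ne {K : ℕ} (hK : 2 ≤ K) (a : Fin K) :
    ((univ : Finset (Fin K)).erase a).Nonempty := by
  rw [← Finset.card_pos, Finset.card_erase_of_mem (mem_univ a), Finset.card_univ,
    Fintype.card_fin]
  omega

/-- `gap_{μ,D}(a) = min_{b ≠ a} Σ_t D(t)(μ_{t,a} - μ_{t,b})`. -/
def gap {T K : ℕ} (hK : 2 ≤ K) (D : Fin T → ℝ) (μ : Fin T → Fin K → ℝ) (a : Fin K) : ℝ :=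
  ((univ : Finset (Fin K)).erase a).inf' (erase_ne hK a)
    (fun b => ∑ t : Fin T, D t * (μ t a - μ t b))

/-- `D`-weighted external regret of the recommendation sequence `I` on rewards `u`:
`max_{a} Σ_t D(t)(u_{t,a} - u_{t,I_t})`.  (Taking `u := μ` gives pseudo-regret.) -/
def extReg {T K : ℕ} (hK : 2 ≤ K) (D : Fin T → ℝ) (I : Fin T → Fin K)
    (u : Fin T → Fin K → ℝ) : ℝ :=
  (univ : Finset (Fin K)).sup' (univ_ne hK) (fun a => ∑ t : Fin T, D t * (u t a - u t (I t)))

/-- `D`-weighted swap regret: `max_{φ : A → A} Σ_t D(t)(u_{t,φ(I_t)} - u_{t,I_t})`. -/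
def swapReg {T K : ℕ} (D : Fin T → ℝ) (I : Fin T → Fin K)
    (u : Fin T → Fin K → ℝ) : ℝ :=
  (univ : Finset (Fin K → Fin K)).sup' ⟨id, mem_univ _⟩
    (fun φ => ∑ t : Fin T, D t * (u t (φ (I t)) - u t (I t)))

end

open scoped ENNReal
section MyAux
lemma my_integrable_of_bounded {Ω : Type*} [MeasurableSpace Ω] (P : Measure Ω)
    [IsFiniteMeasure P] {f : Ω → ℝ} (hm : Measurable f) {C : ℝ} (hb : ∀ ω, |f ω| ≤ C) :
    Integrable f P :=
  (integrable_const C).mono' hm.aestronglyMeasurable (ae_of_all _ fun ω => by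
    simpa [Real.norm_eq_abs] using hb ω)

lemma my_hoeffding {Ω : Type*} [MeasurableSpace Ω] (P : Measure Ω) [IsProbabilityMeasure P]
    (X : Ω → ℝ) (hm : Measurable X) (c : ℝ) (hb : ∀ ω, |X ω| ≤ c)
    (h0 : ∫ ω, X ω ∂P = 0) :
    ∫ ω, Real.exp (X ω) ∂P ≤ Real.exp (c ^ 2 / 2) := by
  rcases le_or_gt c 0 with hc | hc
  · have hz : ∀ ω, X ω = 0 := fun ω => abs_eq_zero.mp
      (le_antisymm ((hb ω).trans hc) (abs_nonneg _))
    simp only [hz, Real.exp_zero, integral_const, probReal_univ, ENNReal.toReal_one, smul_eq_mul,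
      mul_one]
    exact Real.one_le_exp (by positivity)
  · have hXint : Integrable X P := my_integrable_of_bounded P hm hb
    have hpt : ∀ ω, Real.exp (X ω) ≤ Real.cosh c + X ω * (Real.sinh c / c) := by
      intro ω
      obtain ⟨h1, h2⟩ := abs_le.mp (hb ω)
      set x := X ω with hx
      have ha : (0:ℝ) ≤ (c - x) / (2 * c) := div_nonneg (by linarith) (by linarith)
      have hb' : (0:ℝ) ≤ (c + x) / (2 * c) := by
        apply div_nonneg (by linarith) (by linarith)
      have hab : (c - x) / (2 * c) + (c + x) / (2 * c) = 1 := by field_simp; ring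
      have hcomb : ((c - x) / (2 * c)) • (-c) + ((c + x) / (2 * c)) • c = x := by
        simp only [smul_eq_mul]; field_simp; ring
      have hcv := convexOn_exp.2 (Set.mem_univ (-c)) (Set.mem_univ c) ha hb' hab
      rw [hcomb] at hcv
      simp only [smul_eq_mul] at hcv
      calc Real.exp x ≤ (c - x) / (2 * c) * Real.exp (-c) + (c + x) / (2 * c) * Real.exp c := hcv
        _ = Real.cosh c + x * (Real.sinh c / c) := by
            rw [Real.cosh_eq, Real.sinh_eq, Real.exp_neg]
            have hec : Real.exp c ≠ 0 := (Real.exp_pos c).ne'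
            field_simp
            ring
    have hint2 : Integrable (fun ω => Real.cosh c + X ω * (Real.sinh c / c)) P :=
      (integrable_const _).add (hXint.mul_const _)
    have hintExp : Integrable (fun ω => Real.exp (X ω)) P := by
      apply my_integrable_of_bounded P hm.exp (C := Real.exp c)
      intro ω
      rw [abs_of_nonneg (Real.exp_nonneg _)]
      exact Real.exp_le_exp.mpr ((le_abs_self _).trans (hb ω))
    calc ∫ ω, Real.exp (X ω) ∂P ≤ ∫ ω, (Real.cosh c + X ω * (Real.sinh c / c)) ∂P :=
          integral_mono hintExp hint2 hpt
      _ = Real.cosh c + (∫ ω, X ω ∂P) * (Real.sinh c / c) := by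
          rw [integral_add (integrable_const _) (hXint.mul_const _), integral_const,
            integral_mul_const]
          simp
      _ = Real.cosh c := by rw [h0]; ring
      _ ≤ Real.exp (c ^ 2 / 2) := Real.cosh_le_exp_half_sq c


lemma my_mgf_bound {T : ℕ} {Ω : Type*} [m0 : MeasurableSpace Ω] (P : Measure Ω)
    [IsProbabilityMeasure P] (ℱ : Filtration ℕ m0)
    (Y : Fin T → Ω → ℝ) (c : Fin T → ℝ) (hc : ∀ t, 0 ≤ c t)
    (hmeas : ∀ t : Fin T, Measurable[ℱ (t.1 + 1)] (Y t))
    (hbd : ∀ t ω, |Y t ω| ≤ c t)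
    (hstep : ∀ (t : Fin T) (F : Ω → ℝ), Measurable[ℱ t.1] F → (∀ ω, 0 ≤ F ω) →
      (∃ B, ∀ ω, F ω ≤ B) →
      ∫ ω, F ω * Real.exp (Y t ω) ∂P ≤ Real.exp (c t ^ 2 / 2) * ∫ ω, F ω ∂P) :
    ∫ ω, Real.exp (∑ t, Y t ω) ∂P ≤ Real.exp (∑ t, c t ^ 2 / 2) := by
  have key : ∀ n : ℕ, n ≤ T →
      ∫ ω, Real.exp (∑ t ∈ Finset.univ.filter (fun t : Fin T => t.1 < n), Y t ω) ∂P ≤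
        Real.exp (∑ t ∈ Finset.univ.filter (fun t : Fin T => t.1 < n), c t ^ 2 / 2) := by
    intro n
    induction n with
    | zero =>
        intro _
        have he : Finset.univ.filter (fun t : Fin T => t.1 < 0) = ∅ := by
          ext t; simp
        simp [he]
    | succ n ih =>
        intro hn
        have hn' : n < T := hn
        have ihn := ih (Nat.le_of_lt hn')
        set tn : Fin T := ⟨n, hn'⟩ with htn
        have hins : Finset.univ.filter (fun t : Fin T => t.1 < n + 1) =
            insert tn (Finset.univ.filter (fun t : Fin T => t.1 < n)) := by
          ext t
          simp only [Finset.mem_filter, Finset.mem_univ, true_and, Finset.mem_insert]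
          constructor
          · intro h
            rcases Nat.lt_succ_iff_lt_or_eq.mp h with h | h
            · exact Or.inr h
            · exact Or.inl (Fin.ext h)
          · rintro (h | h)
            · rw [h]; exact Nat.lt_succ_self n
            · exact Nat.lt_succ_of_lt h
        have hnotmem : tn ∉ Finset.univ.filter (fun t : Fin T => t.1 < n) := by
          simp [htn]
        set F : Ω → ℝ :=
          fun ω => Real.exp (∑ t ∈ Finset.univ.filter (fun t : Fin T => t.1 < n), Y t ω)
          with hF
        have hFmeas : Measurable[ℱ n] F := by
          apply Measurable.exp
          apply Finset.measurable_sum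
          intro t ht
          have ht' : t.1 < n := (Finset.mem_filter.mp ht).2
          exact (hmeas t).mono (ℱ.mono ht') le_rfl
        have hFpos : ∀ ω, 0 ≤ F ω := fun ω => (Real.exp_pos _).le
        have hFbd : ∃ B, ∀ ω, F ω ≤ B := by
          refine ⟨Real.exp (∑ t ∈ Finset.univ.filter (fun t : Fin T => t.1 < n), c t), ?_⟩
          intro ω
          apply Real.exp_le_exp.mpr
          exact Finset.sum_le_sum fun t _ => (le_abs_self _).trans (hbd t ω)
        have hstep' := hstep tn F hFmeas hFpos hFbd
        rw [hins]
        simp only [Finset.sum_insert hnotmem]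
        calc ∫ ω, Real.exp (Y tn ω + ∑ t ∈ Finset.univ.filter (fun t : Fin T => t.1 < n), Y t ω) ∂P
            = ∫ ω, F ω * Real.exp (Y tn ω) ∂P := by
              apply integral_congr_ae; apply ae_of_all; intro ω
              simp only [Real.exp_add, hF]; ring
          _ ≤ Real.exp (c tn ^ 2 / 2) * ∫ ω, F ω ∂P := hstep'
          _ ≤ Real.exp (c tn ^ 2 / 2) *
                Real.exp (∑ t ∈ Finset.univ.filter (fun t : Fin T => t.1 < n), c t ^ 2 / 2) := by
              apply mul_le_mul_of_nonneg_left ihn (Real.exp_nonneg _)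
          _ = Real.exp (c tn ^ 2 / 2 +
                ∑ t ∈ Finset.univ.filter (fun t : Fin T => t.1 < n), c t ^ 2 / 2) := by
              rw [Real.exp_add]
  have hferr : Finset.univ.filter (fun t : Fin T => t.1 < T) = Finset.univ := by
    ext t; simp [t.isLt]
  have := key T le_rfl
  rwa [hferr] at this

end MyAux

/-- In the stochastic setup (recommendation `I t` is `F_{t-1}`-measurable,
reward vector `u t` is `F_t`-measurable, independent of `F_{t-1}`, with mean `μ t`),
for every δ ∈ (0,1), with probability at least 1 − δ:
PReg_D(μ) ≤ Reg_D + 2√(2·W₂(D)·ln(2K/δ)). -/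

theorem stmt1 {T K : ℕ} (hK : 2 ≤ K)
    {Ω : Type*} [m0 : MeasurableSpace Ω] (P : Measure Ω) [IsProbabilityMeasure P]
    (ℱ : Filtration ℕ m0)
    (μ : Fin T → Fin K → ℝ) (hμ : ∀ t a, μ t a ∈ Set.Icc (0 : ℝ) 1)
    (D : Fin T → ℝ) (hD0 : ∀ t, 0 ≤ D t) (hD1 : ∑ t, D t = 1)
    (I : Fin T → Ω → Fin K) (hI : ∀ t : Fin T, Measurable[ℱ t.1] (I t))
    (u : Fin T → Ω → Fin K → ℝ)
    (hu01 : ∀ t ω a, u t ω a ∈ Set.Icc (0 : ℝ) 1)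
    (huMeas : ∀ t : Fin T, Measurable[ℱ (t.1 + 1)] (u t))
    (huIndep : ∀ t : Fin T,
      Indep (MeasurableSpace.comap (u t) inferInstance) (ℱ t.1) P)
    (huMean : ∀ (t : Fin T) (a : Fin K), ∫ ω, u t ω a ∂P = μ t a)
    (δ : ℝ) (hδ : δ ∈ Set.Ioo (0 : ℝ) 1) :
    ENNReal.ofReal (1 - δ) ≤
      P {ω | extReg hK D (fun t => I t ω) μ
        ≤ extReg hK D (fun t => I t ω) (fun t => u t ω)
          + 2 * Real.sqrt (2 * W2 D * Real.log (2 * K / δ))} := by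
  classical
  obtain ⟨hδ0, hδ1⟩ := hδ
  have hK0 : (0:ℝ) < (K:ℝ) := by
    have : (0:ℕ) < K := by omega
    exact_mod_cast this
  have hK2 : (2:ℝ) ≤ (K:ℝ) := by exact_mod_cast hK
  have hW0 : 0 < W2 D := by
    obtain ⟨t, ht⟩ : ∃ t, D t ≠ 0 := by
      by_contra h
      push_neg at h
      simp [h] at hD1
    have h1 : 0 < D t ^ 2 := by positivity
    have h2 : D t ^ 2 ≤ W2 D :=
      Finset.single_le_sum (f := fun s => D s ^ 2) (fun s _ => sq_nonneg _) (Finset.mem_univ t)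
    linarith
  have hx1 : (1:ℝ) < 2 * K / δ := by
    rw [lt_div_iff₀ hδ0]
    nlinarith
  set L := Real.log (2 * K / δ) with hLdef
  have hL : 0 < L := Real.log_pos hx1
  set ε := 2 * Real.sqrt (2 * W2 D * L) with hεdef
  have hε : 0 < ε := by
    rw [hεdef]
    have : 0 < 2 * W2 D * L := by positivity
    positivity
  set lam := ε / (4 * W2 D) with hlamdef
  have hlam : 0 < lam := by
    rw [hlamdef]; positivity
  have hε2 : ε ^ 2 = 8 * W2 D * L := by
    rw [hεdef, mul_pow, Real.sq_sqrt (by positivity)]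
    ring
  have hWne : W2 D ≠ 0 := ne_of_gt hW0
  have hexpid : 2 * lam ^ 2 * W2 D - lam * ε = -L := by
    rw [hlamdef]
    field_simp
    nlinarith [hε2]
  -- increments
  set X : Fin K → Fin T → Ω → ℝ :=
    fun a t ω => D t * ((μ t a - μ t (I t ω)) - (u t ω a - u t ω (I t ω))) with hXdef
  have hImeas : ∀ (t : Fin T) (n : ℕ), t.1 ≤ n → Measurable[ℱ n] (I t) :=
    fun t n h => (hI t).mono (ℱ.mono h) le_rfl
  have humeas' : ∀ (t : Fin T) (n : ℕ), t.1 + 1 ≤ n → Measurable[ℱ n] (u t) :=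
    fun t n h => (huMeas t).mono (ℱ.mono h) le_rfl
  have hueval : ∀ (t : Fin T) (b : Fin K) (n : ℕ), t.1 + 1 ≤ n →
      Measurable[ℱ n] (fun ω => u t ω b) :=
    fun t b n h => (measurable_pi_apply b).comp (humeas' t n h)
  have huIm : ∀ (t : Fin T) (n : ℕ), t.1 + 1 ≤ n →
      Measurable[ℱ n] (fun ω => u t ω (I t ω)) := by
    intro t n h
    have hrw : (fun ω => u t ω (I t ω)) =
        fun ω => ∑ i : Fin K, ((I t) ⁻¹' {i}).indicator (fun ω => u t ω i) ω := by
      funext ω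
      rw [Finset.sum_eq_single (I t ω)]
      · simp [Set.indicator_apply]
      · intro b _ hb
        simp [Set.indicator_apply, Set.mem_preimage, Ne.symm hb]
      · intro hmem; exact absurd (Finset.mem_univ _) hmem
    rw [hrw]
    apply Finset.measurable_sum
    intro i _
    exact (hueval t i n h).indicator (hImeas t n (by omega) (measurableSet_singleton i))
  have hXmeas : ∀ (a : Fin K) (t : Fin T), Measurable[ℱ (t.1 + 1)] (X a t) := by
    intro a t
    simp only [hXdef]
    apply Measurable.const_mul
    exact (measurable_const.sub
        ((measurable_of_countable (μ t)).comp (hImeas t _ (by omega)))).sub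
      ((hueval t a _ le_rfl).sub (huIm t _ le_rfl))
  have hXbd : ∀ (a : Fin K) (t : Fin T) (ω : Ω), |X a t ω| ≤ 2 * D t := by
    intro a t ω
    simp only [hXdef]
    rw [abs_mul, abs_of_nonneg (hD0 t)]
    obtain ⟨h1a, h1b⟩ := hμ t a
    obtain ⟨h2a, h2b⟩ := hμ t (I t ω)
    obtain ⟨h3a, h3b⟩ := hu01 t ω a
    obtain ⟨h4a, h4b⟩ := hu01 t ω (I t ω)
    have habs : |(μ t a - μ t (I t ω)) - (u t ω a - u t ω (I t ω))| ≤ 2 := by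
      rw [abs_le]; constructor <;> linarith
    calc D t * |(μ t a - μ t (I t ω)) - (u t ω a - u t ω (I t ω))|
        ≤ D t * 2 := mul_le_mul_of_nonneg_left habs (hD0 t)
      _ = 2 * D t := by ring
  -- per-arm tail bound
  have tail : ∀ a : Fin K, P {ω | ε ≤ ∑ t, X a t ω} ≤ ENNReal.ofReal (δ / (2 * K)) := by
    intro a
    have hYmeas : ∀ t : Fin T, Measurable[ℱ (t.1 + 1)] (fun ω => lam * X a t ω) :=
      fun t => (hXmeas a t).const_mul lam
    have hYbd : ∀ (t : Fin T) (ω : Ω), |lam * X a t ω| ≤ lam * (2 * D t) := by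
      intro t ω
      rw [abs_mul, abs_of_nonneg hlam.le]
      exact mul_le_mul_of_nonneg_left (hXbd a t ω) hlam.le
    have hstep : ∀ (t : Fin T) (F : Ω → ℝ), Measurable[ℱ t.1] F → (∀ ω, 0 ≤ F ω) →
        (∃ B, ∀ ω, F ω ≤ B) →
        ∫ ω, F ω * Real.exp (lam * X a t ω) ∂P ≤
          Real.exp ((lam * (2 * D t)) ^ 2 / 2) * ∫ ω, F ω ∂P := by
      intro t F hFmeas hFpos hFbd
      obtain ⟨B, hB⟩ := hFbd
      set g : Fin K → (Fin K → ℝ) → ℝ :=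
        fun i v => lam * (D t * ((μ t a - μ t i) - (v a - v i))) with hgdef
      have hgmeas : ∀ i, Measurable (g i) := by
        intro i
        apply Measurable.const_mul
        apply Measurable.const_mul
        exact measurable_const.sub ((measurable_pi_apply a).sub (measurable_pi_apply i))
      set A : Fin K → Ω → ℝ := fun i => ((I t) ⁻¹' {i}).indicator F with hAdef
      set Bf : Fin K → Ω → ℝ := fun i ω => Real.exp (g i (u t ω)) with hBdef
      have hpt : ∀ ω, F ω * Real.exp (lam * X a t ω) = ∑ i, A i ω * Bf i ω := by
        intro ω
        symm
        rw [Finset.sum_eq_single (I t ω)]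
        · simp only [hAdef, hBdef, hgdef, hXdef, Set.indicator_apply, Set.mem_preimage,
            Set.mem_singleton_iff, if_pos rfl]
          simp
        · intro b _ hb
          simp [hAdef, Set.indicator_apply, Set.mem_preimage, Ne.symm hb]
        · intro hmem; exact absurd (Finset.mem_univ _) hmem
      have hAmeasF : ∀ i, Measurable[ℱ t.1] (A i) := fun i =>
        hFmeas.indicator ((hI t) (measurableSet_singleton i))
      have hAmeas : ∀ i, Measurable (A i) := fun i => (hAmeasF i).mono (ℱ.le _) le_rfl
      have hAbd : ∀ i ω, |A i ω| ≤ max B 0 := by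
        intro i ω
        simp only [hAdef, Set.indicator_apply]
        by_cases h : ω ∈ (I t) ⁻¹' {i}
        · rw [if_pos h, abs_of_nonneg (hFpos ω)]
          exact le_max_of_le_left (hB ω)
        · rw [if_neg h]; simp
      have hAnn : ∀ i ω, 0 ≤ A i ω := fun i ω =>
        Set.indicator_nonneg (fun ω _ => hFpos ω) ω
      have hAint : ∀ i, Integrable (A i) P := fun i =>
        my_integrable_of_bounded P (hAmeas i) (hAbd i)
      have hgbd : ∀ i ω, |g i (u t ω)| ≤ lam * (2 * D t) := by
        intro i ω
        simp only [hgdef]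
        obtain ⟨h1a, h1b⟩ := hμ t a
        obtain ⟨h2a, h2b⟩ := hμ t i
        obtain ⟨h3a, h3b⟩ := hu01 t ω a
        obtain ⟨h4a, h4b⟩ := hu01 t ω i
        rw [abs_mul, abs_of_nonneg hlam.le, abs_mul, abs_of_nonneg (hD0 t)]
        have habs : |(μ t a - μ t i) - (u t ω a - u t ω i)| ≤ 2 := by
          rw [abs_le]; constructor <;> linarith
        have h5 : D t * |(μ t a - μ t i) - (u t ω a - u t ω i)| ≤ D t * 2 :=
          mul_le_mul_of_nonneg_left habs (hD0 t)
        have h6 : lam * (D t * |(μ t a - μ t i) - (u t ω a - u t ω i)|) ≤ lam * (D t * 2) :=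
          mul_le_mul_of_nonneg_left h5 hlam.le
        linarith
      have hBmeas : ∀ i, Measurable (Bf i) := by
        intro i
        exact ((hgmeas i).comp ((humeas' t (t.1 + 1) le_rfl).mono (ℱ.le _) le_rfl)).exp
      have hBbd : ∀ i ω, |Bf i ω| ≤ Real.exp (lam * (2 * D t)) := by
        intro i ω
        simp only [hBdef]
        rw [abs_of_nonneg (Real.exp_nonneg _)]
        exact Real.exp_le_exp.mpr ((le_abs_self _).trans (hgbd i ω))
      have hBint : ∀ i, Integrable (Bf i) P := fun i =>
        my_integrable_of_bounded P (hBmeas i) (hBbd i)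
      have hABint : ∀ i, Integrable (fun ω => A i ω * Bf i ω) P := by
        intro i
        apply my_integrable_of_bounded P ((hAmeas i).mul (hBmeas i))
          (C := max B 0 * Real.exp (lam * (2 * D t)))
        intro ω
        rw [Pi.mul_apply, abs_mul]
        exact mul_le_mul (hAbd i ω) (hBbd i ω) (abs_nonneg _) (le_max_right B 0)
      have hIndep : ∀ i, IndepFun (A i) (Bf i) P := by
        intro i
        rw [IndepFun_iff_Indep]
        refine indep_of_indep_of_le_right (indep_of_indep_of_le_left (huIndep t).symm ?_) ?_
        · exact (hAmeasF i).comap_le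
        · show MeasurableSpace.comap ((fun v => Real.exp (g i v)) ∘ (u t)) _ ≤ _
          rw [← MeasurableSpace.comap_comp]
          exact MeasurableSpace.comap_mono ((hgmeas i).exp.comap_le)
      have huint : ∀ b : Fin K, Integrable (fun ω => u t ω b) P := by
        intro b
        apply my_integrable_of_bounded P
          ((hueval t b _ le_rfl).mono (ℱ.le _) le_rfl) (C := 1)
        intro ω
        obtain ⟨h1, h2⟩ := hu01 t ω b
        rw [abs_le]; constructor <;> linarith
      have hmeanB : ∀ i, ∫ ω, Bf i ω ∂P ≤ Real.exp ((lam * (2 * D t)) ^ 2 / 2) := by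
        intro i
        apply my_hoeffding P (fun ω => g i (u t ω))
          ((hgmeas i).comp ((humeas' t (t.1 + 1) le_rfl).mono (ℱ.le _) le_rfl))
          (lam * (2 * D t)) (hgbd i)
        have hrw2 : (fun ω => g i (u t ω)) = fun ω =>
            lam * D t * (μ t a - μ t i) - lam * D t * (u t ω a - u t ω i) := by
          funext ω; simp only [hgdef]; ring
        have hint2 : Integrable (fun ω => lam * D t * (u t ω a - u t ω i)) P := by
          have h7 := (((huint a).sub (huint i)).const_mul (lam * D t))
          simpa using h7
        rw [hrw2, integral_sub (integrable_const _) hint2, integral_const,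
          integral_const_mul, integral_sub (huint a) (huint i), huMean, huMean]
        simp
      calc ∫ ω, F ω * Real.exp (lam * X a t ω) ∂P
          = ∫ ω, ∑ i, A i ω * Bf i ω ∂P := integral_congr_ae (ae_of_all _ hpt)
        _ = ∑ i, ∫ ω, A i ω * Bf i ω ∂P := integral_finset_sum _ (fun i _ => hABint i)
        _ = ∑ i, (∫ ω, A i ω ∂P) * ∫ ω, Bf i ω ∂P := by
              refine Finset.sum_congr rfl fun i _ => ?_
              exact ProbabilityTheory.IndepFun.integral_fun_mul_eq_mul_integral (hIndep i) (hAint i).1 (hBint i).1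
        _ ≤ ∑ i, (∫ ω, A i ω ∂P) * Real.exp ((lam * (2 * D t)) ^ 2 / 2) := by
              refine Finset.sum_le_sum fun i _ => ?_
              exact mul_le_mul_of_nonneg_left (hmeanB i) (integral_nonneg (hAnn i))
        _ = Real.exp ((lam * (2 * D t)) ^ 2 / 2) * ∑ i, ∫ ω, A i ω ∂P := by
              rw [Finset.mul_sum]
              exact Finset.sum_congr rfl fun i _ => mul_comm _ _
        _ = Real.exp ((lam * (2 * D t)) ^ 2 / 2) * ∫ ω, F ω ∂P := by
              congr 1
              rw [← integral_finset_sum _ (fun i _ => hAint i)]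
              refine integral_congr_ae (ae_of_all _ fun ω => ?_)
              show (∑ i : Fin K, A i ω) = F ω
              rw [Finset.sum_eq_single (I t ω)]
              · simp [hAdef, Set.indicator_apply]
              · intro b _ hb
                simp [hAdef, Set.indicator_apply, Set.mem_preimage, Ne.symm hb]
              · intro hmem; exact absurd (Finset.mem_univ _) hmem
    have hMGF := my_mgf_bound P ℱ (fun t ω => lam * X a t ω) (fun t => lam * (2 * D t))
      (fun t => mul_nonneg hlam.le (by linarith [hD0 t])) hYmeas hYbd hstep
    have hsumc : (∑ t : Fin T, (lam * (2 * D t)) ^ 2 / 2) = 2 * lam ^ 2 * W2 D := by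
      simp only [W2, Finset.mul_sum]
      refine Finset.sum_congr rfl fun t _ => ?_
      ring
    rw [hsumc] at hMGF
    -- Markov
    set S : Ω → ℝ := fun ω => ∑ t, X a t ω with hSdef
    have hSmeas : Measurable S := by
      apply Finset.measurable_sum
      intro t _
      exact (hXmeas a t).mono (ℱ.le _) le_rfl
    have hSbd : ∀ ω, |S ω| ≤ 2 := by
      intro ω
      calc |∑ t, X a t ω| ≤ ∑ t, |X a t ω| := Finset.abs_sum_le_sum_abs _ _
        _ ≤ ∑ t, 2 * D t := Finset.sum_le_sum fun t _ => hXbd a t ω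
        _ = 2 := by rw [← Finset.mul_sum, hD1, mul_one]
    have hfmeas : Measurable (fun ω => Real.exp (lam * S ω)) := (hSmeas.const_mul lam).exp
    have hfint : Integrable (fun ω => Real.exp (lam * S ω)) P := by
      apply my_integrable_of_bounded P hfmeas (C := Real.exp (lam * 2))
      intro ω
      rw [abs_of_nonneg (Real.exp_nonneg _)]
      exact Real.exp_le_exp.mpr
        (mul_le_mul_of_nonneg_left ((le_abs_self _).trans (hSbd ω)) hlam.le)
    have hint_le : ∫ ω, Real.exp (lam * S ω) ∂P ≤ Real.exp (2 * lam ^ 2 * W2 D) := by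
      refine le_trans (le_of_eq ?_) hMGF
      refine integral_congr_ae (ae_of_all _ fun ω => ?_)
      rw [hSdef]
      simp only [Finset.mul_sum]
    have hmarkov := mul_meas_ge_le_integral_of_nonneg
      (ae_of_all _ fun ω => (Real.exp_nonneg (lam * S ω))) hfint (Real.exp (lam * ε))
    have hsub : {ω | ε ≤ S ω} ⊆ {ω | Real.exp (lam * ε) ≤ Real.exp (lam * S ω)} :=
      fun ω h => Real.exp_le_exp.mpr (mul_le_mul_of_nonneg_left h hlam.le)
    have hPle : (P {ω | ε ≤ S ω}).toReal ≤
        (P {ω | Real.exp (lam * ε) ≤ Real.exp (lam * S ω)}).toReal :=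
      ENNReal.toReal_mono (measure_ne_top _ _) (measure_mono hsub)
    have h1 : Real.exp (lam * ε) * (P {ω | ε ≤ S ω}).toReal ≤
        Real.exp (2 * lam ^ 2 * W2 D) :=
      le_trans (mul_le_mul_of_nonneg_left hPle (Real.exp_nonneg _)) (le_trans hmarkov hint_le)
    have h2 : (P {ω | ε ≤ S ω}).toReal ≤
        Real.exp (2 * lam ^ 2 * W2 D) / Real.exp (lam * ε) :=
      (le_div_iff₀' (Real.exp_pos _)).mpr h1
    rw [← Real.exp_sub, hexpid] at h2
    have hexpneg : Real.exp (-L) = δ / (2 * K) := by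
      rw [Real.exp_neg, hLdef, Real.exp_log (by positivity), inv_div]
    rw [hexpneg] at h2
    exact (ENNReal.le_ofReal_iff_toReal_le (measure_ne_top _ _) (by positivity)).mpr h2
  -- union bound and conclusion
  set bad : Set Ω := ⋃ a : Fin K, {ω | ε ≤ ∑ t, X a t ω} with hbad
  have hPbad : P bad ≤ ENNReal.ofReal (δ / 2) := by
    calc P bad ≤ ∑' a : Fin K, P {ω | ε ≤ ∑ t, X a t ω} := measure_iUnion_le _
      _ = ∑ a : Fin K, P {ω | ε ≤ ∑ t, X a t ω} := tsum_fintype _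
      _ ≤ ∑ _ : Fin K, ENNReal.ofReal (δ / (2 * K)) := Finset.sum_le_sum fun a _ => tail a
      _ = (K : ENNReal) * ENNReal.ofReal (δ / (2 * K)) := by
          rw [Finset.sum_const, Finset.card_univ, Fintype.card_fin, nsmul_eq_mul]
      _ = ENNReal.ofReal ((K : ℝ) * (δ / (2 * K))) := by
          rw [ENNReal.ofReal_mul (by positivity), ENNReal.ofReal_natCast]
      _ = ENNReal.ofReal (δ / 2) := by
          congr 1
          field_simp
  have hgood : ∀ ω, ω ∉ bad →
      extReg hK D (fun t => I t ω) μ ≤ extReg hK D (fun t => I t ω) (fun t => u t ω) + ε := by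
    intro ω hω
    rw [hbad] at hω
    simp only [Set.mem_iUnion, Set.mem_setOf_eq, not_exists, not_le] at hω
    have hsup : extReg hK D (fun t => I t ω) μ = (univ.sup' (univ_ne hK)
        fun a => ∑ t : Fin T, D t * (μ t a - μ t (I t ω))) := rfl
    rw [hsup]
    apply Finset.sup'_le
    intro a _
    have hdecomp : ∑ t : Fin T, D t * (μ t a - μ t (I t ω)) =
        (∑ t : Fin T, D t * (u t ω a - u t ω (I t ω))) + ∑ t, X a t ω := by
      rw [← Finset.sum_add_distrib]
      refine Finset.sum_congr rfl fun t _ => ?_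
      simp only [hXdef]
      ring
    rw [hdecomp]
    have h1 : ∑ t : Fin T, D t * (u t ω a - u t ω (I t ω)) ≤
        extReg hK D (fun t => I t ω) (fun t => u t ω) := by
      simp only [extReg]
      exact Finset.le_sup' (fun b => ∑ t : Fin T, D t * (u t ω b - u t ω (I t ω)))
        (Finset.mem_univ a)
    linarith [hω a]
  have hsub2 : Set.univ \ bad ⊆ {ω | extReg hK D (fun t => I t ω) μ
      ≤ extReg hK D (fun t => I t ω) (fun t => u t ω) + ε} :=
    fun ω h => hgood ω h.2
  have h1le : (1 : ℝ≥0∞) ≤ P {ω | extReg hK D (fun t => I t ω) μ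
      ≤ extReg hK D (fun t => I t ω) (fun t => u t ω) + ε} + ENNReal.ofReal (δ / 2) := by
    calc (1 : ℝ≥0∞) = P Set.univ := measure_univ.symm
      _ ≤ P ((Set.univ \ bad) ∪ bad) := measure_mono (fun ω _ => by
          by_cases h : ω ∈ bad
          · exact Or.inr h
          · exact Or.inl ⟨trivial, h⟩)
      _ ≤ P (Set.univ \ bad) + P bad := measure_union_le _ _
      _ ≤ _ := add_le_add (measure_mono hsub2) hPbad
  have h2le : ENNReal.ofReal (1 - δ) + ENNReal.ofReal (δ / 2) ≤ (1 : ℝ≥0∞) := by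
    rw [← ENNReal.ofReal_add (by linarith) (by linarith)]
    exact ENNReal.ofReal_le_one.mpr (by linarith)
  exact (ENNReal.add_le_add_iff_right ENNReal.ofReal_ne_top).mp (le_trans h2le h1le)
end

section
/- In the stochastic setup with a fixed reward-mean sequence μ, the expected D-weighted pseudo-regret is bounded by the expected D-weighted external regret plus a concentration term: E[PReg_D(μ)] ≤ E[Reg_D] + 2√(2·W₂(D)·ln(2K)). -/
open Finset MeasureTheory ProbabilityTheory

section auxlemmas
open Finset MeasureTheory ProbabilityTheory

lemma my_sup'_sub_const {K : ℕ} (h : (univ : Finset (Fin K)).Nonempty)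
    (f : Fin K → ℝ) (c : ℝ) :
    univ.sup' h (fun a => f a - c) = univ.sup' h f - c := by
  apply le_antisymm
  · exact Finset.sup'_le _ _ fun a _ => sub_le_sub_right (Finset.le_sup' f (mem_univ a)) c
  · rw [sub_le_iff_le_add]
    refine Finset.sup'_le _ _ fun a _ => ?_
    have := Finset.le_sup' (fun a => f a - c) (mem_univ a)
    linarith

lemma my_integrable_sup' {Ω : Type*} [MeasurableSpace Ω] (P : MeasureTheory.Measure Ω)
    {ι : Type*} (s : Finset ι) (hs : s.Nonempty) (f : ι → Ω → ℝ)
    (hf : ∀ i, MeasureTheory.Integrable (f i) P) :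
    MeasureTheory.Integrable (fun ω => s.sup' hs (fun i => f i ω)) P := by
  refine hs.cons_induction
    (motive := fun s hs => MeasureTheory.Integrable (fun ω => s.sup' hs (fun i => f i ω)) P)
    ?_ ?_
  · intro i; simpa using hf i
  · intro i s hi hs ih
    have : (fun ω => (Finset.cons i s hi).sup' (Finset.cons_nonempty hi) (fun j => f j ω))
        = fun ω => f i ω ⊔ s.sup' hs (fun j => f j ω) := by
      funext ω; exact Finset.sup'_cons (f := fun j => f j ω) hs
    rw [this]
    exact (hf i).sup ih

lemma my_integrable_of_bound {Ω : Type*} [MeasurableSpace Ω]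
    (P : MeasureTheory.Measure Ω) [MeasureTheory.IsProbabilityMeasure P]
    (f : Ω → ℝ) (hf : Measurable f) (C : ℝ) (h : ∀ ω, |f ω| ≤ C) :
    MeasureTheory.Integrable f P :=
  MeasureTheory.Integrable.mono' (MeasureTheory.integrable_const C)
    hf.aestronglyMeasurable
    (Filter.Eventually.of_forall (by simpa [Real.norm_eq_abs] using h))

end auxlemmas

/-- In the stochastic setup, the expected D-weighted pseudo-regret is
bounded by the expected D-weighted external regret plus 2√(2·W₂(D)·ln(2K)). -/
theorem stmt2 {T K : ℕ} (hK : 2 ≤ K)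
    {Ω : Type*} [m0 : MeasurableSpace Ω] (P : Measure Ω) [IsProbabilityMeasure P]
    (ℱ : Filtration ℕ m0)
    (μ : Fin T → Fin K → ℝ) (hμ : ∀ t a, μ t a ∈ Set.Icc (0 : ℝ) 1)
    (D : Fin T → ℝ) (hD0 : ∀ t, 0 ≤ D t) (hD1 : ∑ t, D t = 1)
    (I : Fin T → Ω → Fin K) (hI : ∀ t : Fin T, Measurable[ℱ t.1] (I t))
    (u : Fin T → Ω → Fin K → ℝ)
    (hu01 : ∀ t ω a, u t ω a ∈ Set.Icc (0 : ℝ) 1)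
    (huMeas : ∀ t : Fin T, Measurable[ℱ (t.1 + 1)] (u t))
    (huIndep : ∀ t : Fin T,
      Indep (MeasurableSpace.comap (u t) inferInstance) (ℱ t.1) P)
    (huMean : ∀ (t : Fin T) (a : Fin K), ∫ ω, u t ω a ∂P = μ t a) :
    ∫ ω, extReg hK D (fun t => I t ω) μ ∂P ≤
      (∫ ω, extReg hK D (fun t => I t ω) (fun t => u t ω) ∂P)
        + 2 * Real.sqrt (2 * W2 D * Real.log (2 * K)) := by
  classical
  -- basic measurability
  have hImeas : ∀ t : Fin T, Measurable (I t) :=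
    fun t => (hI t).mono (ℱ.le t.1) le_rfl
  have huam : ∀ (t : Fin T) (a : Fin K), Measurable (fun ω => u t ω a) :=
    fun t a => (measurable_pi_apply a).comp ((huMeas t).mono (ℱ.le (t.1 + 1)) le_rfl)
  have hμImeas : ∀ t : Fin T, Measurable (fun ω => μ t (I t ω)) :=
    fun t => (measurable_of_finite (μ t)).comp (hImeas t)
  set Y : Fin T → Fin K → Ω → ℝ := fun t a ω => if I t ω = a then (1:ℝ) else 0 with hY
  have hYmeasF : ∀ (t : Fin T) (a : Fin K), Measurable[ℱ t.1] (Y t a) := by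
    intro t a
    have hset : MeasurableSet[ℱ t.1] {ω | I t ω = a} := hI t (measurableSet_singleton a)
    exact Measurable.ite hset measurable_const measurable_const
  have hYmeas : ∀ (t : Fin T) (a : Fin K), Measurable (Y t a) :=
    fun t a => (hYmeasF t a).mono (ℱ.le t.1) le_rfl
  have huIeq : ∀ (t : Fin T),
      (fun ω => u t ω (I t ω)) = fun ω => ∑ a : Fin K, u t ω a * Y t a ω := by
    intro t; funext ω; simp [hY, mul_ite, mul_one, mul_zero]
  have hμIeq : ∀ (t : Fin T),
      (fun ω => μ t (I t ω)) = fun ω => ∑ a : Fin K, μ t a * Y t a ω := by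
    intro t; funext ω; simp [hY, mul_ite, mul_one, mul_zero]
  have huImeas : ∀ t : Fin T, Measurable (fun ω => u t ω (I t ω)) := by
    intro t
    rw [huIeq t]
    exact Finset.measurable_sum _ fun a _ => (huam t a).mul (hYmeas t a)
  -- integrability
  have habs : ∀ x : ℝ, x ∈ Set.Icc (0:ℝ) 1 → |x| ≤ 1 := by
    intro x hx; rw [abs_le]; exact ⟨by linarith [hx.1], hx.2⟩
  have hYabs : ∀ (t : Fin T) (a : Fin K) (ω : Ω), |Y t a ω| ≤ 1 := by
    intro t a ω; by_cases h : I t ω = a <;> simp [hY, h]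
  have hu_int : ∀ (t : Fin T) (a : Fin K), Integrable (fun ω => u t ω a) P :=
    fun t a => my_integrable_of_bound P _ (huam t a) 1 fun ω => habs _ (hu01 t ω a)
  have hY_int : ∀ (t : Fin T) (a : Fin K), Integrable (Y t a) P :=
    fun t a => my_integrable_of_bound P _ (hYmeas t a) 1 (hYabs t a)
  have huI_int : ∀ t : Fin T, Integrable (fun ω => u t ω (I t ω)) P :=
    fun t => my_integrable_of_bound P _ (huImeas t) 1 fun ω => habs _ (hu01 t ω (I t ω))
  have hμI_int : ∀ t : Fin T, Integrable (fun ω => μ t (I t ω)) P :=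
    fun t => my_integrable_of_bound P _ (hμImeas t) 1 fun ω => habs _ (hμ t (I t ω))
  have hprod_int : ∀ (t : Fin T) (a : Fin K),
      Integrable (fun ω => u t ω a * Y t a ω) P := by
    intro t a
    refine my_integrable_of_bound P _ ((huam t a).mul (hYmeas t a)) 1 fun ω => ?_
    rw [abs_mul]
    exact mul_le_one₀ (habs _ (hu01 t ω a)) (abs_nonneg _) (hYabs t a ω)
  have hμprod_int : ∀ (t : Fin T) (a : Fin K),
      Integrable (fun ω => μ t a * Y t a ω) P :=
    fun t a => (hY_int t a).const_mul (μ t a)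
  -- key identity : E[u_{t,I_t}] = E[μ_{t,I_t}]
  have key : ∀ t : Fin T, ∫ ω, u t ω (I t ω) ∂P = ∫ ω, μ t (I t ω) ∂P := by
    intro t
    have hind : ∀ a : Fin K, IndepFun (fun ω => u t ω a) (Y t a) P := by
      intro a
      rw [IndepFun_iff]
      intro s1 s2 hs1 hs2
      refine (Indep_iff _ _ P).1 (huIndep t) s1 s2 ?_ ?_
      · obtain ⟨B, hB, rfl⟩ := hs1
        exact ⟨(fun v : Fin K → ℝ => v a) ⁻¹' B, (measurable_pi_apply a) hB, rfl⟩
      · obtain ⟨B, hB, rfl⟩ := hs2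
        exact hYmeasF t a hB
    rw [huIeq t, hμIeq t, integral_finset_sum _ (fun a _ => hprod_int t a),
      integral_finset_sum _ (fun a _ => hμprod_int t a)]
    refine Finset.sum_congr rfl fun a _ => ?_
    have h1 : ∫ ω, u t ω a * Y t a ω ∂P
        = (∫ ω, u t ω a ∂P) * ∫ ω, Y t a ω ∂P :=
      IndepFun.integral_fun_mul_eq_mul_integral (hind a) (hu_int t a).aestronglyMeasurable
        (hY_int t a).aestronglyMeasurable
    rw [h1, huMean t a, integral_const_mul]
  -- the maximizer of the deterministic sums
  obtain ⟨astar, -, hstar⟩ := Finset.exists_mem_eq_sup' (univ_ne hK)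
      (fun a : Fin K => ∑ t : Fin T, D t * μ t a)
  -- pseudo-regret splits
  have hext_mu : ∀ ω : Ω, extReg hK D (fun t => I t ω) μ
      = (univ.sup' (univ_ne hK) fun a : Fin K => ∑ t : Fin T, D t * μ t a)
        - ∑ t : Fin T, D t * μ t (I t ω) := by
    intro ω
    have hfe : (fun a : Fin K => ∑ t : Fin T, D t * (μ t a - μ t (I t ω)))
        = fun a : Fin K => (∑ t : Fin T, D t * μ t a)
            - ∑ t : Fin T, D t * μ t (I t ω) := by
      funext a
      rw [← Finset.sum_sub_distrib]
      exact Finset.sum_congr rfl fun t _ => by ring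
    unfold extReg
    rw [hfe, my_sup'_sub_const]
  -- integrability of pieces in the regret
  have hsub_int : ∀ (a : Fin K) (t : Fin T),
      Integrable (fun ω => D t * (u t ω a - u t ω (I t ω))) P := by
    intro a t
    have := (((hu_int t a).sub (huI_int t)).const_mul (D t))
    simpa using this
  have hterm_int : ∀ a : Fin K,
      Integrable (fun ω => ∑ t : Fin T, D t * (u t ω a - u t ω (I t ω))) P :=
    fun a => integrable_finset_sum _ fun t _ => hsub_int a t
  have rhs_int : Integrable
      (fun ω => extReg hK D (fun t => I t ω) (fun t => u t ω)) P :=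
    my_integrable_sup' P (univ : Finset (Fin K)) (univ_ne hK)
      (fun a ω => ∑ t : Fin T, D t * (u t ω a - u t ω (I t ω))) hterm_int
  -- value of both integrals
  have hA : ∫ ω, extReg hK D (fun t => I t ω) μ ∂P
      = (univ.sup' (univ_ne hK) fun a : Fin K => ∑ t : Fin T, D t * μ t a)
        - ∑ t : Fin T, D t * ∫ ω, μ t (I t ω) ∂P := by
    rw [integral_congr_ae (Filter.Eventually.of_forall hext_mu),
      integral_sub (integrable_const _)
        (integrable_finset_sum _ fun t _ => (hμI_int t).const_mul (D t)),
      integral_const, integral_finset_sum _ fun t _ => (hμI_int t).const_mul (D t)]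
    simp [integral_const_mul]
  have hB : ∫ ω, (∑ t : Fin T, D t * (u t ω astar - u t ω (I t ω))) ∂P
      = (univ.sup' (univ_ne hK) fun a : Fin K => ∑ t : Fin T, D t * μ t a)
        - ∑ t : Fin T, D t * ∫ ω, μ t (I t ω) ∂P := by
    rw [integral_finset_sum _ fun t _ => hsub_int astar t]
    have hterm : ∀ t : Fin T, ∫ ω, D t * (u t ω astar - u t ω (I t ω)) ∂P
        = D t * μ t astar - D t * ∫ ω, μ t (I t ω) ∂P := by
      intro t
      rw [integral_const_mul, integral_sub (hu_int t astar) (huI_int t),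
        huMean t astar, key t]
      ring
    rw [Finset.sum_congr rfl fun t _ => hterm t, Finset.sum_sub_distrib, hstar]
  have step1 : ∫ ω, extReg hK D (fun t => I t ω) μ ∂P
      ≤ ∫ ω, extReg hK D (fun t => I t ω) (fun t => u t ω) ∂P := by
    rw [hA, ← hB]
    refine integral_mono (hterm_int astar) rhs_int fun ω => ?_
    exact Finset.le_sup' (fun a : Fin K => ∑ t : Fin T, D t * (u t ω a - u t ω (I t ω)))
      (mem_univ astar)
  have hsqrt : 0 ≤ 2 * Real.sqrt (2 * W2 D * Real.log (2 * K)) := by positivity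
  linarith
end

section
/- For any ρ-slowly-moving reward-mean sequence μ, any temporal belief D on {1,…,T}, and any sequence of recommendations I_1,…,I_T ∈ A, the D-weighted pseudo swap-regret is bounded by the D-weighted pseudo-regret plus a drift term: PSReg_D(μ) ≤ PReg_D(μ) + 2ρ·Φ(D). -/
open Finset MeasureTheory ProbabilityTheory

lemma drift_nat {T K : ℕ} {μ : Fin T → Fin K → ℝ} {ρ : ℝ} (hslow : SlowlyMoving μ ρ) :
    ∀ (n : ℕ) (s t : Fin T), t.1 = s.1 + n → ∀ c, |μ t c - μ s c| ≤ n * ρ := by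
  intro n
  induction n with
  | zero =>
    intro s t h c
    have : t = s := Fin.ext (by omega)
    simp [this]
  | succ n ih =>
    intro s t h c
    have ht2 := t.2
    have hm : s.1 + n < T := by omega
    have h1 := ih s ⟨s.1 + n, hm⟩ rfl c
    have ht : s.1 + n + 1 < T := by omega
    have h2 := hslow ⟨s.1 + n, hm⟩ ht c
    have hts : t = ⟨s.1 + n + 1, ht⟩ := Fin.ext (by simp; omega)
    rw [hts]
    calc |μ ⟨s.1 + n + 1, ht⟩ c - μ s c|
        ≤ |μ ⟨s.1 + n + 1, ht⟩ c - μ ⟨s.1 + n, hm⟩ c| + |μ ⟨s.1 + n, hm⟩ c - μ s c| :=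
          abs_sub_le _ _ _
      _ ≤ ρ + n * ρ := add_le_add h2 h1
      _ = (n + 1 : ℕ) * ρ := by push_cast; ring

lemma drift {T K : ℕ} {μ : Fin T → Fin K → ℝ} {ρ : ℝ} (hslow : SlowlyMoving μ ρ)
    (s t : Fin T) (c : Fin K) : μ t c - μ s c ≤ ρ * |(t.1 : ℝ) - (s.1 : ℝ)| := by
  rcases le_total s.1 t.1 with h | h
  · have hd := drift_nat hslow (t.1 - s.1) s t (by omega) c
    have habs : |(t.1 : ℝ) - (s.1 : ℝ)| = ((t.1 - s.1 : ℕ) : ℝ) := by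
      rw [abs_of_nonneg (sub_nonneg.2 (Nat.cast_le.2 h))]
      push_cast [Nat.cast_sub h]; ring
    calc μ t c - μ s c ≤ |μ t c - μ s c| := le_abs_self _
      _ ≤ ((t.1 - s.1 : ℕ) : ℝ) * ρ := hd
      _ = ρ * |(t.1 : ℝ) - (s.1 : ℝ)| := by rw [habs]; ring
  · have hd := drift_nat hslow (s.1 - t.1) t s (by omega) c
    have habs : |(t.1 : ℝ) - (s.1 : ℝ)| = ((s.1 - t.1 : ℕ) : ℝ) := by
      rw [abs_sub_comm, abs_of_nonneg (sub_nonneg.2 (Nat.cast_le.2 h))]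
      push_cast [Nat.cast_sub h]; ring
    calc μ t c - μ s c ≤ |μ t c - μ s c| := le_abs_self _
      _ = |μ s c - μ t c| := abs_sub_comm _ _
      _ ≤ ((s.1 - t.1 : ℕ) : ℝ) * ρ := hd
      _ = ρ * |(t.1 : ℝ) - (s.1 : ℝ)| := by rw [habs]; ring

/-- For a ρ-slowly-moving reward-mean sequence μ, temporal belief D and
recommendations I: the D-weighted pseudo swap-regret is at most the D-weighted
pseudo-regret plus the drift term 2ρ·Φ(D). -/
theorem stmt5 {T K : ℕ} (hK : 2 ≤ K) (ρ : ℝ)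
    (μ : Fin T → Fin K → ℝ) (hμ : ∀ t a, μ t a ∈ Set.Icc (0 : ℝ) 1)
    (hslow : SlowlyMoving μ ρ)
    (D : Fin T → ℝ) (hD0 : ∀ t, 0 ≤ D t) (hD1 : ∑ t, D t = 1)
    (I : Fin T → Fin K) :
    swapReg D I μ ≤ extReg hK D I μ + 2 * ρ * PhiD D := by
  classical
  have hT : 0 < T := by
    by_contra h
    have hT0 : T = 0 := by omega
    subst hT0
    simp at hD1
  -- best fixed action
  obtain ⟨b, -, hb⟩ :=
    Finset.exists_mem_eq_sup' (univ_ne hK) (fun a => ∑ t : Fin T, D t * μ t a)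
  set M := ∑ s : Fin T, D s * μ s b with hM
  have hMc : ∀ c, ∑ s : Fin T, D s * μ s c ≤ M := by
    intro c
    have := Finset.le_sup' (fun a => ∑ t : Fin T, D t * μ t a) (mem_univ c)
    rw [hb] at this
    exact this
  -- pointwise bound
  have hpt : ∀ (c : Fin K) (t : Fin T), μ t c ≤ M + ρ * Psi D t := by
    intro c t
    calc μ t c = ∑ s : Fin T, D s * μ t c := by rw [← Finset.sum_mul, hD1, one_mul]
      _ ≤ ∑ s : Fin T, D s * (μ s c + ρ * |(t.1 : ℝ) - (s.1 : ℝ)|) := by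
          refine Finset.sum_le_sum fun s _ => mul_le_mul_of_nonneg_left ?_ (hD0 s)
          have := drift hslow s t c
          linarith
      _ = (∑ s : Fin T, D s * μ s c) + ρ * Psi D t := by
          rw [Psi, Finset.mul_sum, ← Finset.sum_add_distrib]
          exact Finset.sum_congr rfl fun s _ => by ring
      _ ≤ M + ρ * Psi D t := by linarith [hMc c]
  have hΦ : ∑ t : Fin T, D t * Psi D t = PhiD D := by
    simp only [PhiD, Psi, Finset.mul_sum]
    exact Finset.sum_congr rfl fun s _ => Finset.sum_congr rfl fun t _ => by ring
  have hρΦ : 0 ≤ ρ * PhiD D := by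
    rcases lt_or_ge T 2 with h2 | h2
    · have hΦ0 : PhiD D = 0 := by
        unfold PhiD
        refine Finset.sum_eq_zero fun s _ => Finset.sum_eq_zero fun t _ => ?_
        have hs := s.2; have ht := t.2
        have : s.1 = t.1 := by omega
        rw [this]; simp
      rw [hΦ0, mul_zero]
    · have h01 : 0 < T := by omega
      have h11 : (⟨0, h01⟩ : Fin T).1 + 1 < T := by simp; omega
      have hρ : 0 ≤ ρ :=
        le_trans (abs_nonneg _) (hslow ⟨0, h01⟩ h11 ⟨0, by omega⟩)
      exact mul_nonneg hρ (Finset.sum_nonneg fun s _ => Finset.sum_nonneg fun t _ =>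
        mul_nonneg (mul_nonneg (hD0 s) (hD0 t)) (abs_nonneg _))
  rw [swapReg]
  apply Finset.sup'_le
  intro φ _
  have hext : ∑ t : Fin T, D t * (μ t b - μ t (I t)) ≤ extReg hK D I μ :=
    Finset.le_sup' (fun a => ∑ t : Fin T, D t * (μ t a - μ t (I t))) (mem_univ b)
  calc ∑ t : Fin T, D t * (μ t (φ (I t)) - μ t (I t))
      = (∑ t : Fin T, D t * μ t (φ (I t))) - ∑ t : Fin T, D t * μ t (I t) := by
        rw [← Finset.sum_sub_distrib]
        exact Finset.sum_congr rfl fun t _ => by ring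
    _ ≤ (∑ t : Fin T, D t * (M + ρ * Psi D t)) - ∑ t : Fin T, D t * μ t (I t) := by
        refine sub_le_sub_right (Finset.sum_le_sum fun t _ =>
          mul_le_mul_of_nonneg_left (hpt _ t) (hD0 t)) _
    _ = M + ρ * PhiD D - ∑ t : Fin T, D t * μ t (I t) := by
        have : ∑ t : Fin T, D t * (M + ρ * Psi D t)
            = (∑ t : Fin T, D t) * M + ρ * ∑ t : Fin T, D t * Psi D t := by
          rw [Finset.sum_mul, Finset.mul_sum, ← Finset.sum_add_distrib]
          exact Finset.sum_congr rfl fun t _ => by ring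
        rw [this, hD1, one_mul, hΦ]
    _ = (∑ t : Fin T, D t * (μ t b - μ t (I t))) + ρ * PhiD D := by
        have : ∑ t : Fin T, D t * (μ t b - μ t (I t))
            = M - ∑ t : Fin T, D t * μ t (I t) := by
          rw [hM, ← Finset.sum_sub_distrib]
          exact Finset.sum_congr rfl fun t _ => by ring
        rw [this]; ring
    _ ≤ extReg hK D I μ + ρ * PhiD D := by linarith
    _ ≤ extReg hK D I μ + 2 * ρ * PhiD D := by linarith
end

section
/- For any ρ-slowly-moving reward-mean sequence μ and any temporal belief D on {1,…,T}, the expected best per-round mean is close to the best average mean: E_{s∼D}[max_{a∈A} μ_{s,a}] ≤ max_{a∈A} E_{s∼D}[μ_{s,a}] + ρ·Φ(D). -/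
open Finset MeasureTheory ProbabilityTheory

lemma lip_aux {T K : ℕ} {μ : Fin T → Fin K → ℝ} {ρ : ℝ} (hslow : SlowlyMoving μ ρ) :
    ∀ (n : ℕ) (s : Fin T) (h : s.1 + n < T) (a : Fin K),
      |μ ⟨s.1 + n, h⟩ a - μ s a| ≤ n * ρ := by
  intro n
  induction n with
  | zero =>
    intro s h a
    have : (⟨s.1 + 0, h⟩ : Fin T) = s := by ext; simp
    simp [this]
  | succ n ih =>
    intro s h a
    have h' : s.1 + n < T := by omega
    have h1 : (⟨s.1 + n, h'⟩ : Fin T).1 + 1 < T := by simp; omega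
    have step := hslow ⟨s.1 + n, h'⟩ h1 a
    have e : (⟨(⟨s.1 + n, h'⟩ : Fin T).1 + 1, h1⟩ : Fin T) = ⟨s.1 + (n+1), h⟩ := by
      ext; simp; omega
    rw [e] at step
    calc |μ ⟨s.1 + (n+1), h⟩ a - μ s a|
        ≤ |μ ⟨s.1 + (n+1), h⟩ a - μ ⟨s.1 + n, h'⟩ a| + |μ ⟨s.1 + n, h'⟩ a - μ s a| := by
          have := abs_sub_abs_le_abs_sub (μ ⟨s.1 + (n+1), h⟩ a) (μ s a)
          exact abs_sub_le _ _ _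
      _ ≤ ρ + n * ρ := add_le_add step (ih s h' a)
      _ = (n+1 : ℕ) * ρ := by push_cast; ring

lemma lip {T K : ℕ} {μ : Fin T → Fin K → ℝ} {ρ : ℝ} (hslow : SlowlyMoving μ ρ)
    (a : Fin K) (s t : Fin T) : |μ s a - μ t a| ≤ ρ * |(s.1 : ℝ) - (t.1 : ℝ)| := by
  wlog hle : s.1 ≤ t.1 with H
  · rw [abs_sub_comm, abs_sub_comm (s.1 : ℝ)]
    exact H hslow a t s (by omega)
  · set n := t.1 - s.1 with hn
    have h : s.1 + n < T := by omega
    have e : (⟨s.1 + n, h⟩ : Fin T) = t := by ext; show s.1 + n = t.1; omega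
    have := lip_aux hslow n s h a
    rw [e] at this
    rw [abs_sub_comm]
    have habs : |(s.1 : ℝ) - (t.1 : ℝ)| = (n : ℝ) := by
      rw [hn, Nat.cast_sub hle, abs_sub_comm,
        abs_of_nonneg (sub_nonneg.mpr (Nat.cast_le.mpr hle))]
    rw [habs, mul_comm]
    exact this

/-- For a ρ-slowly-moving reward-mean sequence μ and temporal belief D:
E_{s∼D}[max_a μ_{s,a}] ≤ max_a E_{s∼D}[μ_{s,a}] + ρ·Φ(D). -/
theorem stmt6 {T K : ℕ} (hK : 2 ≤ K) (ρ : ℝ)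
    (μ : Fin T → Fin K → ℝ) (hμ : ∀ t a, μ t a ∈ Set.Icc (0 : ℝ) 1)
    (hslow : SlowlyMoving μ ρ)
    (D : Fin T → ℝ) (hD0 : ∀ t, 0 ≤ D t) (hD1 : ∑ t, D t = 1) :
    ∑ s : Fin T, D s * ((univ : Finset (Fin K)).sup' (univ_ne hK) (fun a => μ s a))
      ≤ (univ : Finset (Fin K)).sup' (univ_ne hK) (fun a => ∑ s : Fin T, D s * μ s a)
        + ρ * PhiD D := by
  have key : ∀ s : Fin T, ((univ : Finset (Fin K)).sup' (univ_ne hK) (fun a => μ s a))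
      ≤ ((univ : Finset (Fin K)).sup' (univ_ne hK) (fun a => ∑ t : Fin T, D t * μ t a))
        + ρ * Psi D s := by
    intro s
    rw [Finset.sup'_le_iff]
    intro a _
    have h1 : μ s a = ∑ t : Fin T, D t * μ s a := by
      rw [← Finset.sum_mul, hD1, one_mul]
    calc μ s a = ∑ t : Fin T, D t * μ s a := h1
      _ ≤ ∑ t : Fin T, D t * (μ t a + ρ * |(s.1:ℝ) - (t.1:ℝ)|) := by
          apply Finset.sum_le_sum
          intro t _
          apply mul_le_mul_of_nonneg_left _ (hD0 t)
          have := lip hslow a s t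
          have := abs_le.mp this
          linarith [this.2]
      _ = (∑ t : Fin T, D t * μ t a) + ρ * Psi D s := by
          rw [Psi, Finset.mul_sum, ← Finset.sum_add_distrib]
          apply Finset.sum_congr rfl
          intro t _
          ring
      _ ≤ _ := by
          gcongr
          exact Finset.le_sup' (fun a => ∑ t : Fin T, D t * μ t a) (mem_univ a)
  calc ∑ s : Fin T, D s * ((univ : Finset (Fin K)).sup' (univ_ne hK) (fun a => μ s a))
      ≤ ∑ s : Fin T, D s * (((univ : Finset (Fin K)).sup' (univ_ne hK)
          (fun a => ∑ t : Fin T, D t * μ t a)) + ρ * Psi D s) := by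
        apply Finset.sum_le_sum
        intro s _
        exact mul_le_mul_of_nonneg_left (key s) (hD0 s)
    _ = (univ : Finset (Fin K)).sup' (univ_ne hK) (fun a => ∑ s : Fin T, D s * μ s a)
        + ρ * PhiD D := by
        simp only [mul_add]
        rw [Finset.sum_add_distrib, ← Finset.sum_mul, hD1, one_mul]
        congr 1
        rw [PhiD, Finset.mul_sum]
        apply Finset.sum_congr rfl
        intro s _
        simp only [Psi, Finset.mul_sum]
        apply Finset.sum_congr rfl
        intro t _
        ring
end

section
/- Fix a ρ-slowly-moving reward-mean sequence μ, a temporal belief D, and an action a ∈ A with gap_{μ,D}(a) ≥ Δ > 0. Then for any sequence of recommendations I_1,…,I_T ∈ A, the D-weighted frequency of recommending a satisfies Σ_{t=1}^T D(t)·1[I_t = a] ≥ 1 − (PReg_D(μ) + 2ρ·Φ(D))/Δ. -/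
open Finset MeasureTheory ProbabilityTheory

lemma slow_dist {T K : ℕ} {μ : Fin T → Fin K → ℝ} {ρ : ℝ} (hslow : SlowlyMoving μ ρ)
    (c : Fin K) (s t : Fin T) : |μ s c - μ t c| ≤ ρ * |(s.1 : ℝ) - (t.1 : ℝ)| := by
  have aux : ∀ (n : ℕ) (s : Fin T) (h : s.1 + n < T),
      |μ ⟨s.1 + n, h⟩ c - μ s c| ≤ ρ * n := by
    intro n
    induction n with
    | zero =>
      intro s h
      have : (⟨s.1 + 0, h⟩ : Fin T) = s := Fin.ext (by simp)
      rw [this]; simp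
    | succ n ih =>
      intro s h
      have h1 : s.1 + n < T := by omega
      have h2 := ih s h1
      have h3 := hslow ⟨s.1 + n, h1⟩ (by show s.1 + n + 1 < T; omega) c
      have heq : (⟨(⟨s.1 + n, h1⟩ : Fin T).1 + 1, by show s.1 + n + 1 < T; omega⟩ : Fin T)
          = ⟨s.1 + (n+1), h⟩ := Fin.ext (by simp; omega)
      rw [heq] at h3
      calc |μ ⟨s.1 + (n+1), h⟩ c - μ s c|
          ≤ |μ ⟨s.1 + (n+1), h⟩ c - μ ⟨s.1 + n, h1⟩ c| + |μ ⟨s.1 + n, h1⟩ c - μ s c| :=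
            abs_sub_le _ _ _
        _ ≤ ρ + ρ * n := add_le_add h3 h2
        _ = ρ * (n+1 : ℕ) := by push_cast; ring
  have key : ∀ (s t : Fin T), s.1 ≤ t.1 → |μ t c - μ s c| ≤ ρ * ((t.1 : ℝ) - s.1) := by
    intro s t hle
    have h : s.1 + (t.1 - s.1) < T := by omega
    have heq : (⟨s.1 + (t.1 - s.1), h⟩ : Fin T) = t := Fin.ext (by simp; omega)
    have := aux (t.1 - s.1) s h
    rw [heq] at this
    have hc : ((t.1 - s.1 : ℕ) : ℝ) = (t.1 : ℝ) - s.1 := by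
      push_cast [Nat.cast_sub hle]; ring
    rwa [hc] at this
  rcases le_total s.1 t.1 with h | h
  · have := key s t h
    rw [abs_sub_comm] at this
    have habs : |(s.1 : ℝ) - (t.1 : ℝ)| = (t.1 : ℝ) - s.1 := by
      rw [abs_sub_comm, abs_of_nonneg (by
        have : (s.1 : ℝ) ≤ t.1 := by exact_mod_cast h
        linarith)]
    rw [habs]; exact this
  · have := key t s h
    have habs : |(s.1 : ℝ) - (t.1 : ℝ)| = (s.1 : ℝ) - t.1 := by
      rw [abs_of_nonneg (by
        have : (t.1 : ℝ) ≤ s.1 := by exact_mod_cast h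
        linarith)]
    rw [habs]; exact this


/-- If gap_{μ,D}(a) ≥ Δ > 0, then for any recommendation sequence I,
the D-weighted frequency of recommending a satisfies
Σ_t D(t)·1[I_t = a] ≥ 1 − (PReg_D(μ) + 2ρ·Φ(D))/Δ. -/
theorem stmt8 {T K : ℕ} (hK : 2 ≤ K) (ρ Δ : ℝ) (hΔ : 0 < Δ)
    (μ : Fin T → Fin K → ℝ) (hμ : ∀ t a, μ t a ∈ Set.Icc (0 : ℝ) 1)
    (hslow : SlowlyMoving μ ρ)
    (D : Fin T → ℝ) (hD0 : ∀ t, 0 ≤ D t) (hD1 : ∑ t, D t = 1)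
    (a : Fin K) (hgap : gap hK D μ a ≥ Δ)
    (I : Fin T → Fin K) :
    ∑ t : Fin T, D t * (if I t = a then (1 : ℝ) else 0)
      ≥ 1 - (extReg hK D I μ + 2 * ρ * PhiD D) / Δ := by
  set S := ∑ t : Fin T, D t * (if I t = a then (1 : ℝ) else 0) with hS
  have hPsi0 : ∀ t, 0 ≤ Psi D t := fun t =>
    Finset.sum_nonneg fun s _ => mul_nonneg (hD0 s) (abs_nonneg _)
  have hPhi : PhiD D = ∑ t, D t * Psi D t := by
    unfold PhiD Psi
    rw [Finset.sum_comm]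
    refine Finset.sum_congr rfl fun t _ => ?_
    rw [Finset.mul_sum]
    refine Finset.sum_congr rfl fun s _ => ?_
    rw [abs_sub_comm]; ring
  have hB : ∀ (t : Fin T) (b : Fin K), b ≠ a → Δ - 2 * ρ * Psi D t ≤ μ t a - μ t b := by
    intro t b hb
    have h1 : Δ ≤ ∑ s, D s * (μ s a - μ s b) :=
      le_trans hgap (Finset.inf'_le _ (Finset.mem_erase.mpr ⟨hb, mem_univ b⟩))
    have h2 : ∑ s, D s * (μ s a - μ s b)
        ≤ ∑ s, D s * ((μ t a - μ t b) + 2 * ρ * |(t.1 : ℝ) - (s.1 : ℝ)|) := by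
      refine Finset.sum_le_sum fun s _ => mul_le_mul_of_nonneg_left ?_ (hD0 s)
      have ha1 := slow_dist hslow a s t
      have hb1 := slow_dist hslow b s t
      have e1 := le_of_abs_le ha1
      have e2 := neg_le_of_abs_le hb1
      have habs : |(t.1 : ℝ) - (s.1 : ℝ)| = |(s.1 : ℝ) - (t.1 : ℝ)| := abs_sub_comm _ _
      rw [habs]
      linarith
    have h3 : ∑ s, D s * ((μ t a - μ t b) + 2 * ρ * |(t.1 : ℝ) - (s.1 : ℝ)|)
        = (μ t a - μ t b) + 2 * ρ * Psi D t := by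
      simp only [mul_add]
      rw [Finset.sum_add_distrib, ← Finset.sum_mul, hD1, one_mul]
      congr 1
      rw [Psi, Finset.mul_sum]
      exact Finset.sum_congr rfl fun s _ => by ring
    rw [h3] at h2
    linarith
  have hext : ∑ t, D t * (μ t a - μ t (I t)) ≤ extReg hK D I μ := by
    unfold extReg
    exact Finset.le_sup' (fun c => ∑ t, D t * (μ t c - μ t (I t))) (mem_univ a)
  have h2 : ∑ t, D t * (if I t = a then (0 : ℝ) else Δ - 2 * ρ * Psi D t)
      ≤ ∑ t, D t * (μ t a - μ t (I t)) := by
    refine Finset.sum_le_sum fun t _ => mul_le_mul_of_nonneg_left ?_ (hD0 t)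
    by_cases h : I t = a
    · simp [h]
    · simp only [h, if_false]; exact hB t (I t) h
  have e1 : ∑ t, D t * (if I t = a then (0 : ℝ) else Δ - 2 * ρ * Psi D t)
      = (∑ t, D t * (if I t = a then (0 : ℝ) else Δ))
        - ∑ t, D t * (if I t = a then (0 : ℝ) else 2 * ρ * Psi D t) := by
    rw [← Finset.sum_sub_distrib]
    refine Finset.sum_congr rfl fun t _ => ?_
    by_cases h : I t = a <;> simp [h] <;> ring
  have e2 : ∑ t, D t * (if I t = a then (0 : ℝ) else Δ) = Δ * (1 - S) := by
    have key : ∀ t, D t * (if I t = a then (0 : ℝ) else Δ)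
        = Δ * D t - Δ * (D t * (if I t = a then (1 : ℝ) else 0)) := by
      intro t; by_cases h : I t = a <;> simp [h] <;> ring
    rw [Finset.sum_congr rfl fun t _ => key t, Finset.sum_sub_distrib,
      ← Finset.mul_sum, ← Finset.mul_sum, hD1, ← hS]
    ring
  have e3 : ∑ t, D t * (if I t = a then (0 : ℝ) else 2 * ρ * Psi D t)
      ≤ 2 * ρ * PhiD D := by
    rw [hPhi, Finset.mul_sum]
    by_cases hρ : 0 ≤ ρ
    · refine Finset.sum_le_sum fun t _ => ?_
      by_cases h : I t = a
      · simp only [h, if_true, mul_zero]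
        have := mul_nonneg (hD0 t) (hPsi0 t)
        nlinarith
      · simp only [h, if_false]
        exact le_of_eq (by ring)
    · have hT : T ≤ 1 := by
        by_contra hT; push_neg at hT
        have h01 : (0 : ℕ) + 1 < T := by omega
        have hs := hslow ⟨0, by omega⟩ h01 a
        have hn := abs_nonneg (μ ⟨0 + 1, h01⟩ a - μ ⟨0, by omega⟩ a)
        push_neg at hρ; linarith
      have hps : ∀ t : Fin T, Psi D t = 0 := by
        intro t
        have hv : ∀ u : Fin T, (u.1 : ℝ) = 0 := by
          intro u
          have := u.isLt
          have : u.1 = 0 := by omega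
          rw [this]; norm_num
        rw [Psi]
        refine Finset.sum_eq_zero fun s _ => ?_
        rw [hv t, hv s]; simp
      simp [hps]
  have hmain : Δ * (1 - S) ≤ extReg hK D I μ + 2 * ρ * PhiD D := by
    linarith [h2, hext, e1, e2, e3]
  have hdiv : 1 - S ≤ (extReg hK D I μ + 2 * ρ * PhiD D) / Δ := by
    rw [le_div_iff₀ hΔ, mul_comm]; exact hmain
  linarith
end
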